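/- In a monoidal dagger category with duals, let (A, m, u; s) be an involution monoid and let p : A → B be a morphism with p† ∘ p = id_A which is an involution-preserving monoid homomorphism into a dagger Frobenius left-involution monoid (B, n, v; t). Then (A, m, u) is itself a dagger Frobenius monoid and s is its left involution; i.e., (A, m, u; s) is a dagger Frobenius left-involution monoid. -/

import Mathlib

open CategoryTheory MonoidalCategory

namespace QAlg

variable {C : Type*} [Category C] [MonoidalCategory C]

/-- A dagger structure on a category. -/
structure Dagger (C : Type*) [Category C] where
  dag : ∀ {X Y : C}, (X ⟶ Y) → (Y ⟶ X)
  dag_dag : ∀ {X Y : C} (f : X ⟶ Y), dag (dag f) = f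
  dag_id : ∀ X : C, dag (𝟙 X) = 𝟙 X
  dag_comp : ∀ {X Y Z : C} (f : X ⟶ Y) (g : Y ⟶ Z), dag (f ≫ g) = dag g ≫ dag f

/-- A monoidal dagger category: the dagger is monoidal and the coherence
isomorphisms are unitary. -/
structure MonoidalDagger (C : Type*) [Category C] [MonoidalCategory C] extends Dagger C where
  dag_tensorHom : ∀ {W X Y Z : C} (f : W ⟶ X) (g : Y ⟶ Z), dag (f ⊗ₘ g) = dag f ⊗ₘ dag g
  dag_associator : ∀ X Y Z : C, dag (α_ X Y Z).hom = (α_ X Y Z).inv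
  dag_leftUnitor : ∀ X : C, dag (λ_ X).hom = (λ_ X).inv
  dag_rightUnitor : ∀ X : C, dag (ρ_ X).hom = (ρ_ X).inv

/-- A morphism is unitary if its dagger is its inverse. -/
def Dagger.IsUnitary (D : Dagger C) {X Y : C} (f : X ⟶ Y) : Prop :=
  f ≫ D.dag f = 𝟙 X ∧ D.dag f ≫ f = 𝟙 Y

/-- Assigned duals and left/right duality morphisms, compatible with the dagger
(the compatibility equations between the duality morphisms, but *not* yet the
condition `((-)^{*L})† = ((-)†)^{*L}`). -/
structure PreDuals (D : MonoidalDagger C) where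
  star : C → C
  ε : ∀ A : C, 𝟙_ C ⟶ star A ⊗ A
  η : ∀ A : C, A ⊗ star A ⟶ 𝟙_ C
  εR : ∀ A : C, 𝟙_ C ⟶ A ⊗ star A
  ηR : ∀ A : C, star A ⊗ A ⟶ 𝟙_ C
  triangle_left₁ : ∀ A : C,
    (ρ_ A).inv ≫ (A ◁ ε A) ≫ (α_ A (star A) A).inv ≫ (η A ▷ A) ≫ (λ_ A).hom = 𝟙 A
  triangle_left₂ : ∀ A : C,
    (λ_ (star A)).inv ≫ (ε A ▷ star A) ≫ (α_ (star A) A (star A)).hom ≫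
      (star A ◁ η A) ≫ (ρ_ (star A)).hom = 𝟙 (star A)
  triangle_right₁ : ∀ A : C,
    (λ_ A).inv ≫ (εR A ▷ A) ≫ (α_ A (star A) A).hom ≫ (A ◁ ηR A) ≫ (ρ_ A).hom = 𝟙 A
  triangle_right₂ : ∀ A : C,
    (ρ_ (star A)).inv ≫ (star A ◁ εR A) ≫ (α_ (star A) A (star A)).inv ≫
      (ηR A ▷ star A) ≫ (λ_ (star A)).hom = 𝟙 (star A)
  star_star : ∀ A : C, star (star A) = A
  star_tensor : ∀ A B : C, star (A ⊗ B) = star B ⊗ star A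
  star_unit : star (𝟙_ C) = 𝟙_ C
  ε_eq_dag_ηR : ∀ A : C, ε A = D.dag (ηR A)
  η_eq_dag_εR : ∀ A : C, η A = D.dag (εR A)
  ε_eq_dag_η_star : ∀ A : C,
    ε A = D.dag (η (star A)) ≫ (star A ◁ eqToHom (star_star A))
  ε_eq_εR_star : ∀ A : C,
    ε A = εR (star A) ≫ (star A ◁ eqToHom (star_star A))
  η_eq_dag_ε_star : ∀ A : C,
    η A = (eqToHom (star_star A).symm ▷ star A) ≫ D.dag (ε (star A))
  η_eq_ηR_star : ∀ A : C,
    η A = (eqToHom (star_star A).symm ▷ star A) ≫ ηR (star A)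

variable {D : MonoidalDagger C}

/-- The left duality functor on morphisms. -/
def PreDuals.starL (P : PreDuals D) {A B : C} (f : A ⟶ B) : P.star B ⟶ P.star A :=
  (λ_ (P.star B)).inv ≫ (P.ε A ▷ P.star B) ≫ (α_ (P.star A) A (P.star B)).hom ≫
    (P.star A ◁ (f ▷ P.star B)) ≫ (P.star A ◁ P.η B) ≫ (ρ_ (P.star A)).hom

/-- The right duality functor on morphisms. -/
def PreDuals.starR (P : PreDuals D) {A B : C} (f : A ⟶ B) : P.star B ⟶ P.star A :=
  (ρ_ (P.star B)).inv ≫ (P.star B ◁ P.εR A) ≫ (α_ (P.star B) A (P.star A)).inv ≫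
    ((P.star B ◁ f) ▷ P.star A) ≫ (P.ηR B ▷ P.star A) ≫ (λ_ (P.star A)).hom

/-- A monoidal dagger category with duals: additionally `((-)^{*L})† = ((-)†)^{*L}`. -/
structure Duals (D : MonoidalDagger C) extends PreDuals D where
  dag_starL : ∀ {A B : C} (f : A ⟶ B),
    D.dag (toPreDuals.starL f) = toPreDuals.starL (D.dag f)

/-- The conjugation functor `f ↦ f_* = (f^*)† = (f†)^*`. -/
def Duals.conj (P : Duals D) {A B : C} (f : A ⟶ B) : P.star A ⟶ P.star B :=
  D.dag (P.starL f)

/-- The abstract dimension of an object, `ε† ∘ ε`. -/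
def Duals.dim (P : Duals D) (A : C) : 𝟙_ C ⟶ 𝟙_ C :=
  P.ε A ≫ D.dag (P.ε A)

/-- Monoid data on an object. -/
structure MonoidOn (A : C) where
  m : A ⊗ A ⟶ A
  u : 𝟙_ C ⟶ A

/-- The monoid axioms. -/
def MonoidOn.IsMonoid {A : C} (M : MonoidOn A) : Prop :=
  ((M.u ▷ A) ≫ M.m = (λ_ A).hom) ∧ ((A ◁ M.u) ≫ M.m = (ρ_ A).hom) ∧
    ((M.m ▷ A) ≫ M.m = (α_ A A A).hom ≫ (A ◁ M.m) ≫ M.m)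

/-- The dagger Frobenius condition: the adjoint comonoid satisfies the
Frobenius law with the monoid. -/
def MonoidOn.IsDagFrobenius {A : C} (M : MonoidOn A) (D : MonoidalDagger C) : Prop :=
  ((D.dag M.m ▷ A) ≫ (α_ A A A).hom ≫ (A ◁ M.m) = M.m ≫ D.dag M.m) ∧
    ((A ◁ D.dag M.m) ≫ (α_ A A A).inv ≫ (M.m ▷ A) = M.m ≫ D.dag M.m)

/-- The canonical left involution of a dagger Frobenius monoid. -/
def Duals.sL (P : Duals D) {A : C} (M : MonoidOn A) : A ⟶ P.star A :=
  (ρ_ A).inv ≫ (A ◁ (P.ε (P.star A) ≫ (eqToHom (P.star_star A) ▷ P.star A))) ≫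
    (α_ A A (P.star A)).inv ≫ ((M.m ≫ D.dag M.u) ▷ P.star A) ≫ (λ_ (P.star A)).hom

/-- The canonical right involution of a dagger Frobenius monoid. -/
def Duals.sR (P : Duals D) {A : C} (M : MonoidOn A) : A ⟶ P.star A :=
  (λ_ A).inv ≫ (P.ε A ▷ A) ≫ (α_ (P.star A) A A).hom ≫
    (P.star A ◁ (M.m ≫ D.dag M.u)) ≫ (ρ_ (P.star A)).hom

/-- Multiplication of the conjugate monoid on `A*`. -/
def Duals.conjMul (P : Duals D) {A : C} (M : MonoidOn A) : P.star A ⊗ P.star A ⟶ P.star A :=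
  eqToHom (P.star_tensor A A).symm ≫ P.conj M.m

/-- Unit of the conjugate monoid on `A*`. -/
def Duals.conjUnit (P : Duals D) {A : C} (M : MonoidOn A) : 𝟙_ C ⟶ P.star A :=
  eqToHom P.star_unit.symm ≫ P.conj M.u

/-- `s : A ⟶ A*` makes the monoid `M` into an involution monoid: it is a monoid
homomorphism to the conjugate monoid and satisfies `s_* ∘ s = id` (via `A** = A`). -/
def Duals.IsInvolutionMonoid (P : Duals D) {A : C} (M : MonoidOn A) (s : A ⟶ P.star A) : Prop :=
  (M.m ≫ s = (s ⊗ₘ s) ≫ P.conjMul M) ∧ (M.u ≫ s = P.conjUnit M) ∧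
    (s ≫ P.conj s ≫ eqToHom (P.star_star A) = 𝟙 A)

/-- Monoid homomorphism property. -/
def IsMonoidHom {A B : C} (M : MonoidOn A) (N : MonoidOn B) (f : A ⟶ B) : Prop :=
  (M.m ≫ f = (f ⊗ₘ f) ≫ N.m) ∧ (M.u ≫ f = N.u)

/-- The endomorphism monoid `End(A)` on `A* ⊗ A`. -/
def Duals.endM (P : Duals D) (A : C) : MonoidOn (P.star A ⊗ A) where
  m := (α_ (P.star A) A (P.star A ⊗ A)).hom ≫ (P.star A ◁ (α_ A (P.star A) A).inv) ≫
    (P.star A ◁ (P.η A ▷ A)) ≫ (P.star A ◁ (λ_ A).hom)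
  u := P.ε A


section Utils

variable {C : Type*} [Category C] [MonoidalCategory C]

namespace MonoidalDagger

variable (D : MonoidalDagger C)

lemma dag_eqToHom {X Y : C} (h : X = Y) : D.dag (eqToHom h) = eqToHom h.symm := by
  cases h; simp [D.dag_id]

lemma dag_whiskerRight {X Y : C} (f : X ⟶ Y) (Z : C) :
    D.dag (f ▷ Z) = D.dag f ▷ Z := by
  rw [← tensorHom_id, D.dag_tensorHom, D.dag_id, tensorHom_id]

lemma dag_whiskerLeft (Z : C) {X Y : C} (f : X ⟶ Y) :
    D.dag (Z ◁ f) = Z ◁ D.dag f := by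
  rw [← id_tensorHom, D.dag_tensorHom, D.dag_id, id_tensorHom]

lemma dag_associator_inv (X Y Z : C) : D.dag (α_ X Y Z).inv = (α_ X Y Z).hom := by
  rw [← D.dag_associator, D.dag_dag]

lemma dag_leftUnitor_inv (X : C) : D.dag (λ_ X).inv = (λ_ X).hom := by
  rw [← D.dag_leftUnitor, D.dag_dag]

lemma dag_rightUnitor_inv (X : C) : D.dag (ρ_ X).inv = (ρ_ X).hom := by
  rw [← D.dag_rightUnitor, D.dag_dag]

end MonoidalDagger

namespace PreDuals

variable {D : MonoidalDagger C} (P : PreDuals D)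

lemma dag_ε (X : C) : D.dag (P.ε X) = P.ηR X := by
  rw [P.ε_eq_dag_ηR, D.dag_dag]

lemma dag_ηR (X : C) : D.dag (P.ηR X) = P.ε X := (P.ε_eq_dag_ηR X).symm

lemma dag_η (X : C) : D.dag (P.η X) = P.εR X := by
  rw [P.η_eq_dag_εR, D.dag_dag]

lemma dag_εR (X : C) : D.dag (P.εR X) = P.η X := (P.η_eq_dag_εR X).symm

/-- transport of `εR` along an equality of objects -/
lemma εR_transport {X Y : C} (h : X = Y) :
    P.εR X = P.εR Y ≫ (eqToHom h.symm ⊗ₘ eqToHom (congrArg P.star h.symm)) := by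
  cases h; simp

/-- Lemma E : the right coevaluation is the left coevaluation of the star object,
modulo the identification `X** = X`. -/
lemma ε_star (X : C) :
    P.ε (P.star X) ≫ (eqToHom (P.star_star X) ▷ P.star X) = P.εR X := by
  rw [P.ε_eq_εR_star (P.star X), P.εR_transport (P.star_star X)]
  simp only [← id_tensorHom, ← tensorHom_id, Category.assoc, tensorHom_comp_tensorHom, tensorHom_comp_tensorHom_assoc,
    eqToHom_trans, Category.comp_id, Category.id_comp, eqToHom_refl, id_tensorHom_id]

-- triangle identities, "hom-form"
lemma tL1 (X : C) : (X ◁ P.ε X) ≫ (α_ X (P.star X) X).inv ≫ (P.η X ▷ X)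
    = (ρ_ X).hom ≫ (λ_ X).inv := by
  have h := P.triangle_left₁ X
  rw [← cancel_epi (ρ_ X).inv, ← cancel_mono (λ_ X).hom]
  simpa using h

lemma tL2 (X : C) : (P.ε X ▷ P.star X) ≫ (α_ (P.star X) X (P.star X)).hom ≫ (P.star X ◁ P.η X)
    = (λ_ (P.star X)).hom ≫ (ρ_ (P.star X)).inv := by
  have h := P.triangle_left₂ X
  rw [← cancel_epi (λ_ (P.star X)).inv, ← cancel_mono (ρ_ (P.star X)).hom]
  simpa using h

lemma tR1 (X : C) : (P.εR X ▷ X) ≫ (α_ X (P.star X) X).hom ≫ (X ◁ P.ηR X)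
    = (λ_ X).hom ≫ (ρ_ X).inv := by
  have h := P.triangle_right₁ X
  rw [← cancel_epi (λ_ X).inv, ← cancel_mono (ρ_ X).hom]
  simpa using h

lemma tR2 (X : C) : (P.star X ◁ P.εR X) ≫ (α_ (P.star X) X (P.star X)).inv ≫ (P.ηR X ▷ P.star X)
    = (ρ_ (P.star X)).hom ≫ (λ_ (P.star X)).inv := by
  have h := P.triangle_right₂ X
  rw [← cancel_epi (ρ_ (P.star X)).inv, ← cancel_mono (λ_ (P.star X)).hom]
  simpa using h

-- triangle identities, "monoidalComp form"
lemma tL1' (X : C) : X ◁ P.ε X ⊗≫ P.η X ▷ X = ⊗𝟙.hom := by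
  convert P.tL1 X using 1 <;> simp [monoidalComp]

lemma tL2' (X : C) : P.ε X ▷ P.star X ⊗≫ P.star X ◁ P.η X = ⊗𝟙.hom := by
  convert P.tL2 X using 1 <;> simp [monoidalComp]

lemma tR1' (X : C) : P.εR X ▷ X ⊗≫ X ◁ P.ηR X = ⊗𝟙.hom := by
  convert P.tR1 X using 1 <;> simp [monoidalComp]

lemma tR2' (X : C) : P.star X ◁ P.εR X ⊗≫ P.ηR X ▷ P.star X = ⊗𝟙.hom := by
  convert P.tR2 X using 1 <;> simp [monoidalComp]

end PreDuals

end Utils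
section Diag

variable {C : Type*} [Category C] [MonoidalCategory C]

namespace PreDuals

variable {D : MonoidalDagger C} (P : PreDuals D)

/-- recovery of a morphism into a star object from its `ηR`-evaluation -/
lemma ev_recover {Z X : C} (g : Z ⟶ P.star X) :
    (ρ_ Z).inv ≫ (Z ◁ P.εR X) ≫ (α_ Z X (P.star X)).inv ≫
      (((g ▷ X) ≫ P.ηR X) ▷ P.star X) ≫ (λ_ (P.star X)).hom = g := by
  calc
    _ = 𝟙 _ ⊗≫ (Z ◁ P.εR X ≫ g ▷ (X ⊗ P.star X)) ⊗≫ P.ηR X ▷ P.star X ⊗≫ 𝟙 _ := by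
      monoidal
    _ = g ⊗≫ (P.star X ◁ P.εR X ⊗≫ P.ηR X ▷ P.star X) ⊗≫ 𝟙 _ := by
      rw [whisker_exchange]; monoidal
    _ = g := by
      rw [P.tR2']; monoidal

lemma ev_inj {Z X : C} {g h : Z ⟶ P.star X}
    (H : (g ▷ X) ≫ P.ηR X = (h ▷ X) ≫ P.ηR X) : g = h := by
  rw [← P.ev_recover g, H, P.ev_recover h]

/-- recovery of a morphism out of a star object from its `ε`-coevaluation -/
lemma eps_recover {Z X : C} (g : P.star X ⟶ Z) :
    (λ_ (P.star X)).inv ≫ ((P.ε X ≫ (g ▷ X)) ▷ P.star X) ≫ (α_ Z X (P.star X)).hom ≫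
      (Z ◁ P.η X) ≫ (ρ_ Z).hom = g := by
  calc
    _ = 𝟙 _ ⊗≫ P.ε X ▷ P.star X ⊗≫ (g ▷ (X ⊗ P.star X) ≫ Z ◁ P.η X) ⊗≫ 𝟙 _ := by
      monoidal
    _ = 𝟙 _ ⊗≫ (P.ε X ▷ P.star X ⊗≫ P.star X ◁ P.η X) ⊗≫ g := by
      rw [← whisker_exchange]; monoidal
    _ = g := by
      rw [P.tL2']; monoidal

lemma eps_inj {Z X : C} {g h : P.star X ⟶ Z}
    (H : P.ε X ≫ (g ▷ X) = P.ε X ≫ (h ▷ X)) : g = h := by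
  rw [← P.eps_recover g, H, P.eps_recover h]

/-- the name of a pairing `f : X ⊗ X ⟶ 𝟙` via the right coevaluation -/
def nmR {X : C} (f : X ⊗ X ⟶ 𝟙_ C) : X ⟶ P.star X :=
  (ρ_ X).inv ≫ (X ◁ P.εR X) ≫ (α_ X X (P.star X)).inv ≫ (f ▷ P.star X) ≫
    (λ_ (P.star X)).hom

lemma nmR_pair {X : C} (f : X ⊗ X ⟶ 𝟙_ C) :
    (P.nmR f ▷ X) ≫ P.ηR X = f := by
  calc
    _ = 𝟙 _ ⊗≫ X ◁ P.εR X ▷ X ⊗≫ (f ▷ (P.star X ⊗ X) ≫ 𝟙_ C ◁ P.ηR X) ⊗≫ 𝟙 _ := by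
      dsimp only [nmR]; monoidal
    _ = 𝟙 _ ⊗≫ X ◁ (P.εR X ▷ X ⊗≫ X ◁ P.ηR X) ⊗≫ f ⊗≫ 𝟙 _ := by
      rw [← whisker_exchange]; monoidal
    _ = f := by
      rw [P.tR1']; monoidal

/-- sliding a morphism through the left coevaluation produces its left mate -/
lemma coev_slide {X Y : C} (f : X ⟶ Y) :
    P.ε Y ≫ (P.starL f ▷ Y) = P.ε X ≫ (P.star X ◁ f) := by
  calc
    _ = 𝟙 _ ⊗≫ (𝟙_ C ◁ P.ε Y ≫ P.ε X ▷ (P.star Y ⊗ Y)) ⊗≫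
        P.star X ◁ f ▷ P.star Y ▷ Y ⊗≫ P.star X ◁ P.η Y ▷ Y ⊗≫ 𝟙 _ := by
      dsimp only [starL]; monoidal
    _ = 𝟙 _ ⊗≫ P.ε X ▷ 𝟙_ C ⊗≫
        ((P.star X ⊗ X) ◁ P.ε Y ≫ (P.star X ◁ f) ▷ (P.star Y ⊗ Y)) ⊗≫
        P.star X ◁ P.η Y ▷ Y ⊗≫ 𝟙 _ := by
      rw [whisker_exchange]; monoidal
    _ = 𝟙 _ ⊗≫ P.ε X ▷ 𝟙_ C ⊗≫ (P.star X ◁ f) ▷ 𝟙_ C ⊗≫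
        P.star X ◁ (Y ◁ P.ε Y ⊗≫ P.η Y ▷ Y) ⊗≫ 𝟙 _ := by
      rw [whisker_exchange]; monoidal
    _ = P.ε X ≫ (P.star X ◁ f) := by
      rw [P.tL1']; monoidal

end PreDuals

end Diag
section DualsLemmas

variable {C : Type*} [Category C] [MonoidalCategory C]

namespace Duals

variable {D : MonoidalDagger C} (P : Duals D)

lemma conj_eq (f : A ⟶ B) : P.conj f = P.starL (D.dag f) := by
  rw [Duals.conj, P.dag_starL]

lemma sL_eq_nmR {A : C} (M : MonoidOn A) :
    P.sL M = P.toPreDuals.nmR (M.m ≫ D.dag M.u) := by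
  dsimp only [Duals.sL, PreDuals.nmR]
  rw [P.toPreDuals.ε_star A]

lemma name_sL {A : C} (M : MonoidOn A) :
    (P.sL M ▷ A) ≫ P.ηR A = M.m ≫ D.dag M.u := by
  rw [P.sL_eq_nmR]; exact P.toPreDuals.nmR_pair _

lemma starL_slide {A B : C} (p : A ⟶ B) :
    (P.starL p ▷ A) ≫ P.ηR A = (P.star B ◁ p) ≫ P.ηR B := by
  have h : D.dag ((P.starL p ▷ A) ≫ P.ηR A) = D.dag ((P.star B ◁ p) ≫ P.ηR B) := by
    rw [D.dag_comp, D.dag_comp, D.dag_whiskerRight, D.dag_whiskerLeft,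
      P.toPreDuals.dag_ηR, P.toPreDuals.dag_ηR, P.dag_starL, P.toPreDuals.coev_slide]
  rw [← D.dag_dag ((P.starL p ▷ A) ≫ P.ηR A), h, D.dag_dag]

lemma conj_slide {A B : C} (p : A ⟶ B) :
    (P.conj p ▷ B) ≫ P.ηR B = (P.star A ◁ D.dag p) ≫ P.ηR A := by
  have h : D.dag ((P.conj p ▷ B) ≫ P.ηR B) = D.dag ((P.star A ◁ D.dag p) ≫ P.ηR A) := by
    rw [D.dag_comp, D.dag_comp, D.dag_whiskerRight, D.dag_whiskerLeft,
      P.toPreDuals.dag_ηR, P.toPreDuals.dag_ηR, Duals.conj, D.dag_dag, D.dag_dag,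
      P.toPreDuals.coev_slide]
  rw [← D.dag_dag ((P.conj p ▷ B) ≫ P.ηR B), h, D.dag_dag]

lemma conj_starL {A B : C} (p : A ⟶ B) (hp : p ≫ D.dag p = 𝟙 A) :
    P.conj p ≫ P.starL p = 𝟙 (P.star A) := by
  apply P.toPreDuals.eps_inj
  rw [P.conj_eq, comp_whiskerRight, ← Category.assoc, P.toPreDuals.coev_slide,
    Category.assoc, whisker_exchange, ← Category.assoc, P.toPreDuals.coev_slide,
    Category.assoc, ← MonoidalCategory.whiskerLeft_comp, hp]
  simp

end Duals

end DualsLemmas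
theorem stmt14 {C : Type*} [Category C] [MonoidalCategory C] {D : MonoidalDagger C}
    (P : Duals D) {A B : C} (M : MonoidOn A) (N : MonoidOn B)
    (hM : M.IsMonoid) (hN : N.IsMonoid) (hFN : N.IsDagFrobenius D)
    (s : A ⟶ P.star A) (hs : P.IsInvolutionMonoid M s)
    (p : A ⟶ B) (hiso : p ≫ D.dag p = 𝟙 A)
    (hhom : IsMonoidHom M N p)
    (hip : p ≫ P.sL N = s ≫ P.conj p) :
    M.IsDagFrobenius D ∧ s = P.sL M := by
  obtain ⟨hmul, hunit⟩ := hhom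
  obtain ⟨hNl, hNr, hNassoc⟩ := hN
  obtain ⟨hF1N, hF2N⟩ := hFN
  obtain ⟨hMl, hMr, hMassoc⟩ := hM
  -- basic transport of structure along p
  have hMu : M.u = N.u ≫ D.dag p := by
    rw [← hunit, Category.assoc, hiso, Category.comp_id]
  have hMm : M.m = (p ⊗ₘ p) ≫ N.m ≫ D.dag p := by
    rw [← Category.assoc, ← hmul, Category.assoc, hiso, Category.comp_id]
  have hduM : D.dag M.u = p ≫ D.dag N.u := by
    rw [hMu, D.dag_comp, D.dag_dag]
  have hφ : M.m ≫ D.dag M.u = (p ⊗ₘ p) ≫ (N.m ≫ D.dag N.u) := by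
    rw [hduM, ← Category.assoc, hmul, Category.assoc]
  have hδ : D.dag M.m = p ≫ D.dag N.m ≫ (D.dag p ⊗ₘ D.dag p) := by
    rw [hMm, D.dag_comp, D.dag_comp, D.dag_tensorHom, D.dag_dag, Category.assoc]
  -- Part 2 : s is the canonical left involution of M
  have hst : s = p ≫ P.sL N ≫ P.starL p := by
    calc s = s ≫ (P.conj p ≫ P.starL p) := by rw [P.conj_starL p hiso, Category.comp_id]
    _ = (s ≫ P.conj p) ≫ P.starL p := by rw [Category.assoc]
    _ = (p ≫ P.sL N) ≫ P.starL p := by rw [← hip]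
    _ = p ≫ P.sL N ≫ P.starL p := by rw [Category.assoc]
  have hevs : (s ▷ A) ≫ P.ηR A = (p ⊗ₘ p) ≫ (N.m ≫ D.dag N.u) := by
    rw [hst]
    calc ((p ≫ P.sL N ≫ P.starL p) ▷ A) ≫ P.ηR A
        = (p ▷ A) ≫ (P.sL N ▷ A) ≫ ((P.starL p ▷ A) ≫ P.ηR A) := by
          simp [comp_whiskerRight]
      _ = (p ▷ A) ≫ ((P.sL N ▷ A) ≫ (P.star B ◁ p)) ≫ P.ηR B := by
          rw [P.starL_slide p]; simp [Category.assoc]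
      _ = (p ▷ A) ≫ ((B ◁ p) ≫ (P.sL N ▷ B)) ≫ P.ηR B := by
          rw [← whisker_exchange]
      _ = ((p ▷ A) ≫ (B ◁ p)) ≫ ((P.sL N ▷ B) ≫ P.ηR B) := by
          simp [Category.assoc]
      _ = (p ⊗ₘ p) ≫ (N.m ≫ D.dag N.u) := by
          rw [← MonoidalCategory.tensorHom_def, P.name_sL N]
  have part2 : s = P.sL M := by
    apply P.toPreDuals.ev_inj
    rw [hevs, P.name_sL M, hφ]
  -- key lemma : the pairing of N pulled back along p
  have hPhip : (p ▷ B) ≫ (N.m ≫ D.dag N.u) = (A ◁ D.dag p) ≫ (M.m ≫ D.dag M.u) := by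
    calc (p ▷ B) ≫ (N.m ≫ D.dag N.u)
        = (p ▷ B) ≫ ((P.sL N ▷ B) ≫ P.ηR B) := by rw [P.name_sL N]
      _ = ((p ≫ P.sL N) ▷ B) ≫ P.ηR B := by simp [comp_whiskerRight, Category.assoc]
      _ = ((s ≫ P.conj p) ▷ B) ≫ P.ηR B := by rw [hip]
      _ = (s ▷ B) ≫ ((P.conj p ▷ B) ≫ P.ηR B) := by simp [comp_whiskerRight, Category.assoc]
      _ = ((s ▷ B) ≫ (P.star A ◁ D.dag p)) ≫ P.ηR A := by
          rw [P.conj_slide p]; simp [Category.assoc]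
      _ = ((A ◁ D.dag p) ≫ (s ▷ A)) ≫ P.ηR A := by rw [whisker_exchange]
      _ = (A ◁ D.dag p) ≫ ((s ▷ A) ≫ P.ηR A) := by simp [Category.assoc]
      _ = (A ◁ D.dag p) ≫ (M.m ≫ D.dag M.u) := by rw [part2, P.name_sL M]
  -- the Frobenius-derived expansion of N.m
  have hcnt : D.dag N.m ≫ ((D.dag N.u) ▷ B) ≫ (λ_ B).hom = 𝟙 B := by
    have h : D.dag (D.dag N.m ≫ ((D.dag N.u) ▷ B) ≫ (λ_ B).hom) = 𝟙 B := by
      rw [D.dag_comp, D.dag_comp, D.dag_whiskerRight, D.dag_dag, D.dag_dag,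
        D.dag_leftUnitor, Category.assoc, hNl]
      simp
    rw [← D.dag_dag (D.dag N.m ≫ ((D.dag N.u) ▷ B) ≫ (λ_ B).hom), h, D.dag_id]
  have coreN : (B ◁ D.dag N.m) ≫ (α_ B B B).inv ≫ ((N.m ≫ D.dag N.u) ▷ B) ≫ (λ_ B).hom
      = N.m := by
    calc (B ◁ D.dag N.m) ≫ (α_ B B B).inv ≫ ((N.m ≫ D.dag N.u) ▷ B) ≫ (λ_ B).hom
        = ((B ◁ D.dag N.m) ≫ (α_ B B B).inv ≫ (N.m ▷ B)) ≫
            (((D.dag N.u) ▷ B) ≫ (λ_ B).hom) := by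
          simp [comp_whiskerRight, Category.assoc]
      _ = (N.m ≫ D.dag N.m) ≫ ((D.dag N.u) ▷ B) ≫ (λ_ B).hom := by rw [hF2N]
      _ = N.m := by rw [Category.assoc, hcnt, Category.comp_id]
  -- pull the expansion back along p
  have e1 : (p ▷ B) ≫ N.m
      = (A ◁ D.dag N.m) ≫ (α_ A B B).inv ≫ (((p ▷ B) ≫ (N.m ≫ D.dag N.u)) ▷ B) ≫
        (λ_ B).hom := by
    conv_lhs => rw [← coreN]
    calc (p ▷ B) ≫ (B ◁ D.dag N.m) ≫ (α_ B B B).inv ≫ ((N.m ≫ D.dag N.u) ▷ B) ≫ (λ_ B).hom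
        = ((p ▷ B) ≫ (B ◁ D.dag N.m)) ≫ (α_ B B B).inv ≫ ((N.m ≫ D.dag N.u) ▷ B) ≫
            (λ_ B).hom := by simp [Category.assoc]
      _ = ((A ◁ D.dag N.m) ≫ (p ▷ (B ⊗ B))) ≫ (α_ B B B).inv ≫
            ((N.m ≫ D.dag N.u) ▷ B) ≫ (λ_ B).hom := by rw [← whisker_exchange]
      _ = (A ◁ D.dag N.m) ≫ (α_ A B B).inv ≫ (((p ▷ B) ≫ (N.m ≫ D.dag N.u)) ▷ B) ≫
            (λ_ B).hom := by
          simp only [Category.assoc, associator_inv_naturality_left_assoc, comp_whiskerRight]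
  have e2 : (p ▷ B) ≫ N.m
      = (A ◁ D.dag N.m) ≫ (α_ A B B).inv ≫
        (((A ◁ D.dag p) ≫ (M.m ≫ D.dag M.u)) ▷ B) ≫ (λ_ B).hom := by
    rw [e1, hPhip]
  have suf : (α_ A B B).inv ≫ (((A ◁ D.dag p) ≫ (M.m ≫ D.dag M.u)) ▷ B) ≫ (λ_ B).hom ≫
        D.dag p
      = (A ◁ (D.dag p ⊗ₘ D.dag p)) ≫ (α_ A A A).inv ≫ ((M.m ≫ D.dag M.u) ▷ A) ≫
        (λ_ A).hom := by
    calc _ = 𝟙 _ ⊗≫ ((A ◁ D.dag p) ▷ B) ⊗≫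
            (((M.m ≫ D.dag M.u) ▷ B) ≫ (𝟙_ C ◁ D.dag p)) ⊗≫ 𝟙 _ := by
          monoidal
      _ = 𝟙 _ ⊗≫ ((A ◁ D.dag p) ▷ B) ⊗≫
            (((A ⊗ A) ◁ D.dag p) ≫ ((M.m ≫ D.dag M.u) ▷ A)) ⊗≫ 𝟙 _ := by
          rw [← whisker_exchange]
      _ = _ := by rw [MonoidalCategory.tensorHom_def]; monoidal
  have coreM' : M.m = (A ◁ D.dag M.m) ≫ (α_ A A A).inv ≫ ((M.m ≫ D.dag M.u) ▷ A) ≫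
      (λ_ A).hom := by
    calc M.m = (A ◁ p) ≫ ((p ▷ B) ≫ N.m) ≫ D.dag p := by
          rw [hMm, tensorHom_def']; simp [Category.assoc]
      _ = (A ◁ p) ≫ ((A ◁ D.dag N.m) ≫ (α_ A B B).inv ≫
            (((A ◁ D.dag p) ≫ (M.m ≫ D.dag M.u)) ▷ B) ≫ (λ_ B).hom) ≫ D.dag p := by
          rw [e2]
      _ = (A ◁ p) ≫ (A ◁ D.dag N.m) ≫ ((α_ A B B).inv ≫
            (((A ◁ D.dag p) ≫ (M.m ≫ D.dag M.u)) ▷ B) ≫ (λ_ B).hom ≫ D.dag p) := by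
          simp [Category.assoc]
      _ = (A ◁ p) ≫ (A ◁ D.dag N.m) ≫ (A ◁ (D.dag p ⊗ₘ D.dag p)) ≫ (α_ A A A).inv ≫
            ((M.m ≫ D.dag M.u) ▷ A) ≫ (λ_ A).hom := by
          rw [suf]
      _ = (A ◁ D.dag M.m) ≫ (α_ A A A).inv ≫ ((M.m ≫ D.dag M.u) ▷ A) ≫ (λ_ A).hom := by
          rw [hδ]; simp [MonoidalCategory.whiskerLeft_comp, Category.assoc]
  have coreδ : D.dag M.m = (λ_ A).inv ≫ ((D.dag (M.m ≫ D.dag M.u)) ▷ A) ≫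
      (α_ A A A).hom ≫ (A ◁ M.m) := by
    have h1 : D.dag ((A ◁ D.dag M.m) ≫ (α_ A A A).inv ≫ ((M.m ≫ D.dag M.u) ▷ A) ≫
        (λ_ A).hom)
        = (λ_ A).inv ≫ ((D.dag (M.m ≫ D.dag M.u)) ▷ A) ≫ (α_ A A A).hom ≫ (A ◁ M.m) := by
      rw [D.dag_comp, D.dag_comp, D.dag_comp, D.dag_whiskerLeft, D.dag_whiskerRight,
        D.dag_dag, D.dag_leftUnitor, D.dag_associator_inv]
      simp [Category.assoc]
    conv_lhs => rw [coreM']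
    rw [h1]
  have F1 : (D.dag M.m ▷ A) ≫ (α_ A A A).hom ≫ (A ◁ M.m) = M.m ≫ D.dag M.m := by
    calc (D.dag M.m ▷ A) ≫ (α_ A A A).hom ≫ (A ◁ M.m)
        = 𝟙 _ ⊗≫ (D.dag (M.m ≫ D.dag M.u) ▷ (A ⊗ A)) ⊗≫ (A ◁ ((M.m ▷ A) ≫ M.m)) ⊗≫
            𝟙 _ := by
          rw [coreδ]; monoidal
      _ = 𝟙 _ ⊗≫ (D.dag (M.m ≫ D.dag M.u) ▷ (A ⊗ A)) ⊗≫
            (A ◁ ((α_ A A A).hom ≫ (A ◁ M.m) ≫ M.m)) ⊗≫ 𝟙 _ := by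
          rw [hMassoc]
      _ = 𝟙 _ ⊗≫ ((D.dag (M.m ≫ D.dag M.u) ▷ (A ⊗ A)) ≫ ((A ⊗ A) ◁ M.m)) ⊗≫
            (A ◁ M.m) ⊗≫ 𝟙 _ := by
          monoidal
      _ = 𝟙 _ ⊗≫ ((𝟙_ C ◁ M.m) ≫ (D.dag (M.m ≫ D.dag M.u) ▷ A)) ⊗≫ (A ◁ M.m) ⊗≫ 𝟙 _ := by
          rw [← whisker_exchange]
      _ = M.m ≫ D.dag M.m := by
          rw [coreδ]; monoidal
  have F2 : (A ◁ D.dag M.m) ≫ (α_ A A A).inv ≫ (M.m ▷ A) = M.m ≫ D.dag M.m := by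
    have h2 : D.dag ((D.dag M.m ▷ A) ≫ (α_ A A A).hom ≫ (A ◁ M.m))
        = (A ◁ D.dag M.m) ≫ (α_ A A A).inv ≫ (M.m ▷ A) := by
      rw [D.dag_comp, D.dag_comp, D.dag_whiskerRight, D.dag_whiskerLeft, D.dag_dag,
        D.dag_associator]
      simp [Category.assoc]
    have h3 : D.dag (M.m ≫ D.dag M.m) = M.m ≫ D.dag M.m := by
      rw [D.dag_comp, D.dag_dag]
    rw [← h2, F1, h3]
  exact ⟨⟨F1, F2⟩, part2⟩

end QAlg
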